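/- Let 𝒜 be a complex Banach algebra with ‖1‖ = 1, let n ≥ 0 and let (c_k)_{k∈ℕ} be complex numbers with c_k = 0 for all k ≤ n, defining h(x) = Σ_{k} c_k x^k and its majorant h̃(t) = Σ_{k} |c_k| t^k. Let A ∈ 𝒜, let s be a nonnegative integer, let θ > 0 and tol ≥ 0 be real numbers such that Σ_k |c_k| θ^k converges, ‖2^{−s}·A‖ ≤ θ, and h̃(θ)/θ ≤ tol. Then ‖2^s · h(2^{−s}·A)‖ ≤ tol · ‖A‖; that is, the backward error ΔA = 2^s·h_{n+1}(2^{−s}A) of the scaled-and-squared approximation satisfies ‖ΔA‖/‖A‖ ≤ tol whenever A ≠ 0. -/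

import Mathlib

/-- Backward-error bound for scaling and squaring: if `h(x) = ∑ₖ cₖ xᵏ` with `cₖ = 0`
for `k ≤ n`, `‖2⁻ˢ A‖ ≤ θ` and `h̃(θ)/θ ≤ tol`, then the backward error
`ΔA = 2ˢ h(2⁻ˢ A)` satisfies `‖ΔA‖ ≤ tol ‖A‖`. -/
theorem backward_error_bound (𝒜 : Type*) [NormedRing 𝒜] [NormedAlgebra ℂ 𝒜]
    [CompleteSpace 𝒜] [NormOneClass 𝒜] (n : ℕ) (c : ℕ → ℂ)
    (hc : ∀ k ≤ n, c k = 0) (A : 𝒜) (s : ℕ) (θ tol : ℝ)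
    (hθ : 0 < θ) (htol : 0 ≤ tol)
    (hsum : Summable fun k => ‖c k‖ * θ ^ k)
    (hA : ‖((2 : ℂ) ^ s)⁻¹ • A‖ ≤ θ)
    (hbound : (∑' k, ‖c k‖ * θ ^ k) / θ ≤ tol) :
    ‖((2 : ℂ) ^ s) • ∑' k, c k • (((2 : ℂ) ^ s)⁻¹ • A) ^ k‖ ≤ tol * ‖A‖ := by
  set B := ((2 : ℂ) ^ s)⁻¹ • A with hBdef
  have hB0 : 0 ≤ ‖B‖ := norm_nonneg _
  have hterm : ∀ k, ‖c k • B ^ k‖ ≤ (‖c k‖ * θ ^ k) / θ * ‖B‖ := by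
    intro k
    rw [norm_smul]
    cases k with
    | zero => simp [hc 0 (Nat.zero_le n)]
    | succ m =>
      calc ‖c (m+1)‖ * ‖B ^ (m+1)‖
          ≤ ‖c (m+1)‖ * (θ ^ m * ‖B‖) := by
            apply mul_le_mul_of_nonneg_left _ (norm_nonneg _)
            calc ‖B ^ (m+1)‖ ≤ ‖B‖ ^ (m+1) := norm_pow_le' _ (Nat.succ_pos m)
              _ = ‖B‖ ^ m * ‖B‖ := pow_succ _ _
              _ ≤ θ ^ m * ‖B‖ :=
                  mul_le_mul_of_nonneg_right (pow_le_pow_left₀ hB0 hA m) hB0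
        _ = ‖c (m+1)‖ * θ ^ (m+1) / θ * ‖B‖ := by
            field_simp
            ring
  have hsum' : Summable fun k => (‖c k‖ * θ ^ k) / θ * ‖B‖ :=
    (hsum.div_const θ).mul_right _
  have h1 : ‖∑' k, c k • B ^ k‖ ≤ (∑' k, ‖c k‖ * θ ^ k) / θ * ‖B‖ := by
    calc ‖∑' k, c k • B ^ k‖ ≤ ∑' k, (‖c k‖ * θ ^ k) / θ * ‖B‖ :=
          tsum_of_norm_bounded hsum'.hasSum hterm
      _ = (∑' k, ‖c k‖ * θ ^ k) / θ * ‖B‖ := by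
          rw [tsum_mul_right, tsum_div_const]
  rw [norm_smul]
  have h2 : (0:ℝ) < ‖(2 : ℂ) ^ s‖ := by
    have : ‖(2 : ℂ) ^ s‖ = 2 ^ s := by simp
    rw [this]; positivity
  have hAB : ‖(2 : ℂ) ^ s‖ * ‖B‖ = ‖A‖ := by
    rw [hBdef, norm_smul, ← mul_assoc, norm_inv, mul_inv_cancel₀ (ne_of_gt h2), one_mul]
  calc ‖(2 : ℂ) ^ s‖ * ‖∑' k, c k • B ^ k‖
      ≤ ‖(2 : ℂ) ^ s‖ * ((∑' k, ‖c k‖ * θ ^ k) / θ * ‖B‖) :=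
        mul_le_mul_of_nonneg_left h1 h2.le
    _ ≤ ‖(2 : ℂ) ^ s‖ * (tol * ‖B‖) :=
        mul_le_mul_of_nonneg_left (mul_le_mul_of_nonneg_right hbound hB0) h2.le
    _ = tol * ‖A‖ := by rw [← hAB]; ring
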